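/- For every integer n ≥ 3, let GHZ = |0⟩^{⊗n} + |1⟩^{⊗n} ∈ (ℂ²)^{⊗n} and let W = Σ_{i=1}^{n} |0⟩^{⊗(i−1)} ⊗ |1⟩ ⊗ |0⟩^{⊗(n−i)} ∈ (ℂ²)^{⊗n}. Then the two-dimensional subspace spanned by GHZ and W is a genuinely entangled subspace: every nonzero linear combination a·GHZ + b·W is genuinely multiparty entangled. -/

import Mathlib

noncomputable section

/-- `ψ ∈ ℂ^{d₁} ⊗ ⋯ ⊗ ℂ^{dₙ}` is biproduct across the bipartition `S|S̄` of the parties. -/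
def IsBiproduct {n : ℕ} {d : Fin n → ℕ} (S : Finset (Fin n))
    (ψ : EuclideanSpace ℂ (∀ i, Fin (d i))) : Prop :=
  ∃ (φ : (∀ i : {i // i ∈ S}, Fin (d i.1)) → ℂ)
    (χ : (∀ i : {i // i ∉ S}, Fin (d i.1)) → ℂ),
    ∀ f : ∀ i, Fin (d i), ψ f = φ (fun i => f i.1) * χ (fun i => f i.1)

/-- A genuinely multiparty entangled (GME) vector: nonzero and not biproduct across
any bipartition `S|S̄` with `S` nonempty and proper. -/
def IsGME {n : ℕ} {d : Fin n → ℕ} (ψ : EuclideanSpace ℂ (∀ i, Fin (d i))) : Prop :=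
  ψ ≠ 0 ∧ ∀ S : Finset (Fin n), S.Nonempty → S ≠ Finset.univ → ¬ IsBiproduct S ψ

/-- A genuinely entangled subspace (GES): all its nonzero vectors are GME. -/
def IsGES {n : ℕ} {d : Fin n → ℕ}
    (V : Submodule ℂ (EuclideanSpace ℂ (∀ i, Fin (d i)))) : Prop :=
  ∀ ψ ∈ V, ψ ≠ 0 → IsGME ψ

/-- The (unnormalized) `n`-qubit GHZ state `|0⟩^{⊗n} + |1⟩^{⊗n}`. -/
def ghz (n : ℕ) : EuclideanSpace ℂ (Fin n → Fin 2) :=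
  WithLp.toLp 2 ((fun f => (if f = fun _ => 0 then 1 else 0) + (if f = fun _ => 1 then 1 else 0)) :
    (Fin n → Fin 2) → ℂ)

/-- The (unnormalized) `n`-qubit W state `Σᵢ |0⟩^{⊗(i−1)} ⊗ |1⟩ ⊗ |0⟩^{⊗(n−i)}`. -/
def wState (n : ℕ) : EuclideanSpace ℂ (Fin n → Fin 2) :=
  WithLp.toLp 2 ((fun f => ∑ i : Fin n, if f = (fun j => if j = i then 1 else 0) then 1 else 0) :
    (Fin n → Fin 2) → ℂ)

/-- basis vector with a 1 at position `i` -/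
def eVec {n : ℕ} (i : Fin n) : Fin n → Fin 2 := fun j => if j = i then 1 else 0

lemma ghz_apply (n : ℕ) (f : Fin n → Fin 2) :
    ghz n f = (if f = fun _ => 0 then 1 else 0) + (if f = fun _ => 1 then 1 else 0) := rfl

lemma wState_apply (n : ℕ) (f : Fin n → Fin 2) :
    wState n f = ∑ i : Fin n, if f = eVec i then 1 else 0 := rfl

lemma exists_ne_fin {n : ℕ} (hn : 2 ≤ n) (i : Fin n) : ∃ j : Fin n, j ≠ i := by
  by_contra hc
  push_neg at hc
  have : Fintype.card (Fin n) ≤ 1 :=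
    Fintype.card_le_one_iff.2 fun a b => (hc a).trans (hc b).symm
  simp at this; omega

lemma exists_third {n : ℕ} (hn : 3 ≤ n) (i j : Fin n) : ∃ l : Fin n, l ≠ i ∧ l ≠ j := by
  by_contra hc
  push_neg at hc
  have hsub : (Finset.univ : Finset (Fin n)) ⊆ {i, j} := fun l _ => by
    rcases Classical.em (l = i) with h | h
    · simp [h]
    · simp [hc l h]
  have h1 := Finset.card_le_card hsub
  have h2 := Finset.card_insert_le i ({j} : Finset (Fin n))
  simp at h1 h2
  omega

lemma ghz_zero (n : ℕ) (hn : 0 < n) : ghz n (fun _ => 0) = 1 := by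
  rw [ghz_apply, if_pos rfl, if_neg]
  · ring
  · intro h
    have := congrFun h ⟨0, hn⟩
    simp at this

lemma ghz_one (n : ℕ) (hn : 0 < n) : ghz n (fun _ => 1) = 1 := by
  rw [ghz_apply, if_pos rfl, if_neg]
  · ring
  · intro h
    have := congrFun h ⟨0, hn⟩
    simp at this

lemma ghz_mixed {n : ℕ} {f : Fin n → Fin 2} {i j : Fin n} (h0 : f i = 0) (h1 : f j = 1) :
    ghz n f = 0 := by
  rw [ghz_apply, if_neg, if_neg]
  · ring
  · intro h; rw [h] at h0; simp at h0
  · intro h; rw [h] at h1; simp at h1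

lemma wState_zero (n : ℕ) : wState n (fun _ => 0) = 0 := by
  rw [wState_apply]
  refine Finset.sum_eq_zero fun i _ => if_neg fun h => ?_
  have := congrFun h i
  simp [eVec] at this

lemma wState_one (n : ℕ) (hn : 2 ≤ n) : wState n (fun _ => 1) = 0 := by
  rw [wState_apply]
  refine Finset.sum_eq_zero fun i _ => if_neg fun h => ?_
  obtain ⟨j, hj⟩ := exists_ne_fin hn i
  have := congrFun h j
  simp [eVec, hj] at this

lemma ghz_eVec {n : ℕ} (hn : 2 ≤ n) (i : Fin n) : ghz n (eVec i) = 0 := by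
  obtain ⟨j, hj⟩ := exists_ne_fin hn i
  exact ghz_mixed (f := eVec i) (i := j) (j := i) (by simp [eVec, hj]) (by simp [eVec])

lemma wState_eVec {n : ℕ} (i : Fin n) : wState n (eVec i) = 1 := by
  rw [wState_apply, Finset.sum_eq_single i]
  · simp
  · intro k _ hk
    refine if_neg fun h => ?_
    have := congrFun h i
    simp [eVec, Ne.symm hk] at this
  · simp

lemma wState_two {n : ℕ} {f : Fin n → Fin 2} {i j : Fin n} (hij : i ≠ j)
    (hi : f i = 1) (hj : f j = 1) : wState n f = 0 := by
  rw [wState_apply]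
  refine Finset.sum_eq_zero fun k _ => if_neg fun h => ?_
  have h1 := congrFun h i
  have h2 := congrFun h j
  rw [hi] at h1; rw [hj] at h2
  simp only [eVec] at h1 h2
  by_cases hk : i = k
  · subst hk
    simp [hij.symm] at h2
  · simp [hk] at h1

lemma biprod_key {n : ℕ} {S : Finset (Fin n)} {ψ : EuclideanSpace ℂ (Fin n → Fin 2)}
    (h : IsBiproduct S ψ) (f g : Fin n → Fin 2) :
    ψ (fun k => if k ∈ S then f k else g k) * ψ (fun k => if k ∈ S then g k else f k)
      = ψ f * ψ g := by
  obtain ⟨φ, χ, hφχ⟩ := h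
  rw [hφχ, hφχ, hφχ, hφχ]
  have e1 : (fun i : {i // i ∈ S} => (fun k => if k ∈ S then f k else g k) i.1)
      = fun i => f i.1 := funext fun i => if_pos i.2
  have e2 : (fun i : {i // i ∉ S} => (fun k => if k ∈ S then f k else g k) i.1)
      = fun i => g i.1 := funext fun i => if_neg i.2
  have e3 : (fun i : {i // i ∈ S} => (fun k => if k ∈ S then g k else f k) i.1)
      = fun i => g i.1 := funext fun i => if_pos i.2
  have e4 : (fun i : {i // i ∉ S} => (fun k => if k ∈ S then g k else f k) i.1)
      = fun i => f i.1 := funext fun i => if_neg i.2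
  rw [e1, e2, e3, e4]
  ring

lemma combo_apply (n : ℕ) (a b : ℂ) (f : Fin n → Fin 2) :
    (a • ghz n + b • wState n) f = a * ghz n f + b * wState n f := by
  simp [PiLp.add_apply, PiLp.smul_apply, smul_eq_mul]

lemma gme_combo (n : ℕ) (hn : 3 ≤ n) (a b : ℂ) (hab : ¬(a = 0 ∧ b = 0)) :
    IsGME (a • ghz n + b • wState n) := by
  set ψ := a • ghz n + b • wState n with hψ
  have h2 : 2 ≤ n := by omega
  have h0 : 0 < n := by omega
  have hz : ψ (fun _ => 0) = a := by
    rw [hψ, combo_apply, ghz_zero n h0, wState_zero n]; ring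
  have ho : ψ (fun _ => 1) = a := by
    rw [hψ, combo_apply, ghz_one n h0, wState_one n h2]; ring
  have hE : ∀ i, ψ (eVec i) = b := fun i => by
    rw [hψ, combo_apply, ghz_eVec h2 i, wState_eVec i]; ring
  constructor
  · intro h
    refine hab ⟨?_, ?_⟩
    · rw [← hz, h]; rfl
    · rw [← hE ⟨0, h0⟩, h]; rfl
  · intro S hS hSu hbi
    obtain ⟨i, hi⟩ := hS
    obtain ⟨j, hj⟩ : ∃ j, j ∉ S := by
      by_contra hc
      push_neg at hc
      exact hSu (Finset.eq_univ_iff_forall.2 hc)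
    have hij : i ≠ j := fun h => hj (h ▸ hi)
    -- Step 1: b = 0
    have key1 := biprod_key hbi (eVec i) (eVec j)
    have c1 : (fun k => if k ∈ S then eVec i k else eVec j k)
        = fun k => if k = i ∨ k = j then (1 : Fin 2) else 0 := by
      funext k
      by_cases hkS : k ∈ S
      · rw [if_pos hkS]
        have hkj : k ≠ j := fun h => hj (h ▸ hkS)
        simp [eVec, hkj]
      · rw [if_neg hkS]
        have hki : k ≠ i := fun h => hkS (h ▸ hi)
        simp [eVec, hki]
    have c2 : (fun k => if k ∈ S then eVec j k else eVec i k) = fun _ => (0 : Fin 2) := by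
      funext k
      by_cases hkS : k ∈ S
      · rw [if_pos hkS]
        have hkj : k ≠ j := fun h => hj (h ▸ hkS)
        simp [eVec, hkj]
      · rw [if_neg hkS]
        have hki : k ≠ i := fun h => hkS (h ▸ hi)
        simp [eVec, hki]
    rw [c1, c2, hz, hE, hE] at key1
    have ht : ψ (fun k => if k = i ∨ k = j then (1 : Fin 2) else 0) = 0 := by
      obtain ⟨l, hli, hlj⟩ := exists_third hn i j
      rw [hψ, combo_apply,
        ghz_mixed (f := fun k => if k = i ∨ k = j then (1 : Fin 2) else 0) (i := l) (j := i)
          (by simp [hli, hlj]) (by simp),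
        wState_two (f := fun k => if k = i ∨ k = j then (1 : Fin 2) else 0) hij
          (by simp) (by simp)]
      ring
    rw [ht] at key1
    have hb : b = 0 := by
      have : b * b = 0 := by linear_combination -key1
      exact mul_self_eq_zero.1 this
    -- Step 2: a = 0
    have key2 := biprod_key hbi (fun _ => 1) (fun _ => 0)
    rw [hz, ho] at key2
    have hm : ψ (fun k => if k ∈ S then (1 : Fin 2) else (0 : Fin 2)) = 0 := by
      rw [hψ, combo_apply,
        ghz_mixed (f := fun k => if k ∈ S then (1 : Fin 2) else 0) (i := j) (j := i)
          (by simp [hj]) (by simp [hi]), hb]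
      ring
    rw [hm] at key2
    have ha : a = 0 := by
      have : a * a = 0 := by linear_combination -key2
      exact mul_self_eq_zero.1 this
    exact hab ⟨ha, hb⟩

/-- for every `n ≥ 3` the two-dimensional subspace spanned by the GHZ and W
states is a genuinely entangled subspace: every nonzero combination `a·GHZ + b·W` is GME. -/
theorem ghz_w_span_is_GES (n : ℕ) (hn : 3 ≤ n) :
    Module.finrank ℂ
      (Submodule.span ℂ ({ghz n, wState n} : Set (EuclideanSpace ℂ (Fin n → Fin 2)))) = 2 ∧
    IsGES (Submodule.span ℂ ({ghz n, wState n} : Set (EuclideanSpace ℂ (Fin n → Fin 2)))) ∧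
    ∀ a b : ℂ, ¬(a = 0 ∧ b = 0) → IsGME (a • ghz n + b • wState n) := by
  have h0 : 0 < n := by omega
  refine ⟨?_, ?_, fun a b hab => gme_combo n hn a b hab⟩
  · have hli : LinearIndependent ℂ ![ghz n, wState n] := by
      rw [LinearIndependent.pair_iff]
      intro s t h
      have hz := congrArg (fun ψ : EuclideanSpace ℂ (Fin n → Fin 2) => ψ (fun _ => 0)) h
      have he := congrArg (fun ψ : EuclideanSpace ℂ (Fin n → Fin 2) => ψ (eVec ⟨0, h0⟩)) h
      simp only [combo_apply] at hz he
      rw [ghz_zero n h0, wState_zero n] at hz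
      rw [ghz_eVec (by omega) _, wState_eVec _] at he
      constructor
      · simpa using hz
      · simpa using he
    have hr : Set.range ![ghz n, wState n] = {ghz n, wState n} := by
      ext v; simp [Matrix.range_cons, Matrix.range_empty, or_comm]
    have := finrank_span_eq_card hli
    rw [hr] at this
    simpa using this
  · intro ψ hmem hne
    rw [Submodule.mem_span_pair] at hmem
    obtain ⟨a, b, rfl⟩ := hmem
    refine gme_combo n hn a b fun ⟨ha, hb⟩ => hne ?_
    rw [ha, hb]
    simp
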